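/- A function φ : [1]^m → [1]^n between finite Boolean lattices is an interval-preserving lattice homomorphism if and only if it is a composite of cofaces (insertions of a constant 0 or 1 coordinate), codegeneracies (coordinate projections), and coordinate permutations. -/

import Mathlib

def IsIntervalSet {α : Type*} [Lattice α] (I : Set α) : Prop :=
  ∃ a b : α, a ≤ b ∧ I = Set.Icc a b

section Aux
inductive BoxComposite :
    ∀ {m n : ℕ}, ((Fin m → Bool) → (Fin n → Bool)) → Prop
  | id (n : ℕ) : BoxComposite (id : (Fin n → Bool) → (Fin n → Bool))
  | coface {m n : ℕ} (f : (Fin (m + 1) → Bool) → (Fin n → Bool))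
      (j : Fin (m + 1)) (b : Bool) :
      BoxComposite f →
      BoxComposite (fun x : Fin m → Bool => f (j.insertNth b x))
  | codeg {m n : ℕ} (f : (Fin m → Bool) → (Fin n → Bool)) (j : Fin (m + 1)) :
      BoxComposite f →
      BoxComposite (fun x : Fin (m + 1) → Bool => f (x ∘ j.succAbove))
  | perm {m n : ℕ} (f : (Fin m → Bool) → (Fin n → Bool)) (σ : Equiv.Perm (Fin m)) :
      BoxComposite f →
      BoxComposite (fun x : Fin m → Bool => f (x ∘ σ))
section Aux

open Fin Set

lemma insertNth_sup {m : ℕ} (j : Fin (m+1)) (b : Bool) (x y : Fin m → Bool) :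
    (j.insertNth b x ⊔ j.insertNth b y : Fin (m+1) → Bool) = j.insertNth b (x ⊔ y) := by
  have := Fin.insertNth_binop (α := fun _ : Fin (m+1) => Bool) (fun _ a c => a ⊔ c) j b b x y
  simp only [sup_idem] at this
  rw [Pi.sup_def]
  exact this ▸ rfl

lemma insertNth_inf {m : ℕ} (j : Fin (m+1)) (b : Bool) (x y : Fin m → Bool) :
    (j.insertNth b x ⊓ j.insertNth b y : Fin (m+1) → Bool) = j.insertNth b (x ⊓ y) := by
  have := Fin.insertNth_binop (α := fun _ : Fin (m+1) => Bool) (fun _ a c => a ⊓ c) j b b x y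
  simp only [inf_idem] at this
  rw [Pi.inf_def]
  exact this ▸ rfl

lemma image_insertNth_Icc {m : ℕ} (j : Fin (m+1)) (b : Bool) (a c : Fin m → Bool) :
    (fun v : Fin m → Bool => (j.insertNth b v : Fin (m+1) → Bool)) '' Set.Icc a c
      = Set.Icc (j.insertNth b a) (j.insertNth b c) := by
  ext y
  constructor
  · rintro ⟨v, hv, rfl⟩
    rw [Fin.insertNth_mem_Icc]
    refine ⟨by simp, ?_⟩
    simpa [Fin.insertNth_apply_succAbove] using hv
  · intro hy
    refine ⟨fun t => y (j.succAbove t), ?_, ?_⟩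
    · rw [← Fin.insertNth_self_removeNth j y, Fin.insertNth_mem_Icc] at hy
      show j.removeNth y ∈ Set.Icc a c
      simpa [Fin.insertNth_apply_succAbove] using hy.2
    · have hb : y j = b := by
        rw [← Fin.insertNth_self_removeNth j y, Fin.insertNth_mem_Icc] at hy
        have := hy.1
        simp only [Fin.insertNth_apply_same, Set.mem_Icc] at this
        exact le_antisymm this.2 this.1
      conv_rhs => rw [← Fin.insertNth_self_removeNth j y]
      rw [hb]
      rfl

lemma image_comp_succAbove_Icc {m : ℕ} (j : Fin (m+1)) (a c : Fin (m+1) → Bool)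
    (hac : a ≤ c) :
    (fun x : Fin (m+1) → Bool => x ∘ j.succAbove) '' Set.Icc a c =
      Set.Icc (a ∘ j.succAbove) (c ∘ j.succAbove) := by
  ext y
  constructor
  · rintro ⟨v, hv, rfl⟩
    exact ⟨fun t => hv.1 _, fun t => hv.2 _⟩
  · intro hy
    refine ⟨j.insertNth (a j) y, ⟨?_, ?_⟩, ?_⟩
    · rw [Fin.le_insertNth_iff]
      exact ⟨le_rfl, hy.1⟩
    · rw [Fin.insertNth_le_iff]
      exact ⟨hac j, hy.2⟩
    · funext t
      simp [Fin.insertNth_apply_succAbove]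

lemma image_comp_perm_Icc {m : ℕ} (σ : Equiv.Perm (Fin m)) (a c : Fin m → Bool) :
    (fun x : Fin m → Bool => x ∘ σ) '' Set.Icc a c = Set.Icc (a ∘ σ) (c ∘ σ) := by
  ext y
  constructor
  · rintro ⟨v, hv, rfl⟩
    exact ⟨fun t => hv.1 _, fun t => hv.2 _⟩
  · intro hy
    refine ⟨y ∘ σ.symm, ⟨fun t => ?_, fun t => ?_⟩, ?_⟩
    · simpa using hy.1 (σ.symm t)
    · simpa using hy.2 (σ.symm t)
    · funext t; simp

/-- The conjunction of properties. -/
def BoxProps {m n : ℕ} (φ : (Fin m → Bool) → (Fin n → Bool)) : Prop :=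
  (∀ x y : Fin m → Bool, φ (x ⊔ y) = φ x ⊔ φ y) ∧
    (∀ x y : Fin m → Bool, φ (x ⊓ y) = φ x ⊓ φ y) ∧
    (∀ I : Set (Fin m → Bool), IsIntervalSet I → IsIntervalSet (φ '' I))

lemma boxProps_comp {m p n : ℕ} (f : (Fin p → Bool) → (Fin n → Bool))
    (h : (Fin m → Bool) → (Fin p → Bool)) (hf : BoxProps f)
    (hsup : ∀ x y, h (x ⊔ y) = h x ⊔ h y)
    (hinf : ∀ x y, h (x ⊓ y) = h x ⊓ h y)
    (him : ∀ I : Set (Fin m → Bool), IsIntervalSet I → IsIntervalSet (h '' I)) :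
    BoxProps (fun x => f (h x)) := by
  refine ⟨fun x y => ?_, fun x y => ?_, fun I hI => ?_⟩
  · show f (h (x ⊔ y)) = f (h x) ⊔ f (h y)
    rw [hsup, hf.1]
  · show f (h (x ⊓ y)) = f (h x) ⊓ f (h y)
    rw [hinf, hf.2.1]
  · rw [show (fun x => f (h x)) '' I = f '' (h '' I) from (Set.image_image f h I).symm]
    exact hf.2.2 _ (him I hI)

end Aux
section Aux2

open Fin Set

lemma boxProps_insertNth {m : ℕ} (j : Fin (m+1)) (b : Bool) :
    (∀ x y : Fin m → Bool, j.insertNth b (x ⊔ y) = (j.insertNth b x ⊔ j.insertNth b y : Fin (m+1) → Bool)) ∧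
    (∀ x y : Fin m → Bool, j.insertNth b (x ⊓ y) = (j.insertNth b x ⊓ j.insertNth b y : Fin (m+1) → Bool)) ∧
    (∀ I : Set (Fin m → Bool), IsIntervalSet I →
      IsIntervalSet ((fun v : Fin m → Bool => (j.insertNth b v : Fin (m+1) → Bool)) '' I)) := by
  refine ⟨fun x y => (insertNth_sup j b x y).symm, fun x y => (insertNth_inf j b x y).symm,
    fun I hI => ?_⟩
  obtain ⟨a, c, hac, rfl⟩ := hI
  rw [image_insertNth_Icc]
  refine ⟨_, _, ?_, rfl⟩
  rw [Fin.insertNth_le_iff]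
  constructor
  · simp
  · intro t
    simpa [Fin.insertNth_apply_succAbove] using hac t

lemma boxProps_succAbove {m : ℕ} (j : Fin (m+1)) :
    (∀ I : Set (Fin (m+1) → Bool), IsIntervalSet I →
      IsIntervalSet ((fun x : Fin (m+1) → Bool => x ∘ j.succAbove) '' I)) := by
  intro I hI
  obtain ⟨a, c, hac, rfl⟩ := hI
  rw [image_comp_succAbove_Icc j a c hac]
  exact ⟨_, _, fun t => hac _, rfl⟩

lemma boxProps_perm' {m : ℕ} (σ : Equiv.Perm (Fin m)) :
    (∀ I : Set (Fin m → Bool), IsIntervalSet I →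
      IsIntervalSet ((fun x : Fin m → Bool => x ∘ σ) '' I)) := by
  intro I hI
  obtain ⟨a, c, hac, rfl⟩ := hI
  rw [image_comp_perm_Icc]
  exact ⟨_, _, fun t => hac _, rfl⟩

lemma boxComposite_boxProps {m n : ℕ} (φ : (Fin m → Bool) → (Fin n → Bool))
    (h : BoxComposite φ) : BoxProps φ := by
  induction h with
  | id n =>
    exact ⟨fun x y => rfl, fun x y => rfl, fun I hI => by simpa using hI⟩
  | coface f j b hf ih =>
    exact boxProps_comp f _ ih (boxProps_insertNth j b).1 (boxProps_insertNth j b).2.1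
      (boxProps_insertNth j b).2.2
  | codeg f j hf ih =>
    exact boxProps_comp f _ ih (fun x y => rfl) (fun x y => rfl) (boxProps_succAbove j)
  | perm f σ hf ih =>
    exact boxProps_comp f _ ih (fun x y => rfl) (fun x y => rfl) (boxProps_perm' σ)

end Aux2
section Aux3

open Fin Set

lemma bool_sup : ∀ a b : Bool, a ⊔ b = (a || b) := by decide
lemma bool_inf : ∀ a b : Bool, a ⊓ b = (a && b) := by decide

lemma bool_cons_sup {m : ℕ} (a b : Bool) (y z : Fin m → Bool) :
    (Fin.cons a y ⊔ Fin.cons b z : Fin (m+1) → Bool) = Fin.cons (a ⊔ b) (y ⊔ z) := by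
  funext i
  refine Fin.cases ?_ (fun j => ?_) i <;> simp

lemma bool_cons_inf {m : ℕ} (a b : Bool) (y z : Fin m → Bool) :
    (Fin.cons a y ⊓ Fin.cons b z : Fin (m+1) → Bool) = Fin.cons (a ⊓ b) (y ⊓ z) := by
  funext i
  refine Fin.cases ?_ (fun j => ?_) i <;> simp

/-- Classification of `⊔`/`⊓`-preserving maps `2^m → 2`: constants or projections. -/
lemma classify_latticeHom : ∀ {m : ℕ} (f : (Fin m → Bool) → Bool),
    (∀ x y, f (x ⊔ y) = f x ⊔ f y) → (∀ x y, f (x ⊓ y) = f x ⊓ f y) →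
    (∃ b, ∀ x, f x = b) ∨ ∃ k, ∀ x, f x = x k := by
  intro m
  induction m with
  | zero =>
    intro f _ _
    exact Or.inl ⟨f default, fun x => by rw [Subsingleton.elim x default]⟩
  | succ m ih =>
    intro f hs hi
    have hff : (false ⊔ false : Bool) = false := by decide
    have htt : (true ⊔ true : Bool) = true := by decide
    have hft : (false ⊔ true : Bool) = true := by decide
    have iff' : (false ⊓ false : Bool) = false := by decide
    have itt : (true ⊓ true : Bool) = true := by decide
    have ift : (false ⊓ true : Bool) = false := by decide
    have key : ∀ x : Fin (m+1) → Bool, f x = f (Fin.cons (x 0) (Fin.tail x)) := by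
      intro x; rw [Fin.cons_self_tail]
    set f0 : (Fin m → Bool) → Bool := fun y => f (Fin.cons false y) with hf0
    set f1 : (Fin m → Bool) → Bool := fun y => f (Fin.cons true y) with hf1
    have hs0 : ∀ y z, f0 (y ⊔ z) = f0 y ⊔ f0 z := by
      intro y z
      have : (Fin.cons false (y ⊔ z) : Fin (m+1) → Bool)
          = Fin.cons false y ⊔ Fin.cons false z := by rw [bool_cons_sup, hff]
      simp only [hf0, this, hs]
    have hi0 : ∀ y z, f0 (y ⊓ z) = f0 y ⊓ f0 z := by
      intro y z
      have : (Fin.cons false (y ⊓ z) : Fin (m+1) → Bool)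
          = Fin.cons false y ⊓ Fin.cons false z := by rw [bool_cons_inf, iff']
      simp only [hf0, this, hi]
    have hs1 : ∀ y z, f1 (y ⊔ z) = f1 y ⊔ f1 z := by
      intro y z
      have : (Fin.cons true (y ⊔ z) : Fin (m+1) → Bool)
          = Fin.cons true y ⊔ Fin.cons true z := by rw [bool_cons_sup, htt]
      simp only [hf1, this, hs]
    have hi1 : ∀ y z, f1 (y ⊓ z) = f1 y ⊓ f1 z := by
      intro y z
      have : (Fin.cons true (y ⊓ z) : Fin (m+1) → Bool)
          = Fin.cons true y ⊓ Fin.cons true z := by rw [bool_cons_inf, itt]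
      simp only [hf1, this, hi]
    have hA : ∀ y z, f1 (y ⊔ z) = f0 y ⊔ f1 z := by
      intro y z
      have : (Fin.cons true (y ⊔ z) : Fin (m+1) → Bool)
          = Fin.cons false y ⊔ Fin.cons true z := by rw [bool_cons_sup, hft]
      simp only [hf1, hf0, this, hs]
    have hB : ∀ y z, f0 (y ⊓ z) = f0 y ⊓ f1 z := by
      intro y z
      have : (Fin.cons false (y ⊓ z) : Fin (m+1) → Bool)
          = Fin.cons false y ⊓ Fin.cons true z := by rw [bool_cons_inf, ift]
      simp only [hf0, hf1, this, hi]
    rcases ih f0 hs0 hi0 with ⟨b0, h0⟩ | ⟨k, h0⟩ <;>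
      rcases ih f1 hs1 hi1 with ⟨b1, h1⟩ | ⟨l, h1⟩
    · -- const / const
      cases b0 <;> cases b1
      · refine Or.inl ⟨false, fun x => ?_⟩
        rw [key x]
        cases hx : x 0
        · exact h0 _
        · exact h1 _
      · refine Or.inr ⟨0, fun x => ?_⟩
        rw [key x]
        cases hx : x 0
        · exact h0 _
        · exact h1 _
      · exfalso
        have e := hA (fun _ => false) (fun _ => false)
        rw [h1, h0, h1] at e
        simp [Pi.sup_def, bool_sup] at e
      · refine Or.inl ⟨true, fun x => ?_⟩
        rw [key x]
        cases hx : x 0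
        · exact h0 _
        · exact h1 _
    · -- const / proj : contradiction
      exfalso
      have e1 := hA (fun _ => true) (fun _ => false)
      have e2 := hA (fun _ => false) (fun _ => false)
      rw [h1, h0, h1] at e1
      rw [h1, h0, h1] at e2
      cases b0
      · simp [Pi.sup_def, bool_sup] at e1
      · simp [Pi.sup_def, bool_sup] at e2
    · -- proj / const : contradiction
      exfalso
      have e1 := hB (fun _ => true) (fun _ => true)
      have e2 := hB (fun _ => true) (fun _ => false)
      rw [h0, h0, h1] at e1
      rw [h0, h0, h1] at e2
      cases b1
      · simp [Pi.inf_def, bool_inf] at e1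
      · simp [Pi.inf_def, bool_inf] at e2
    · -- proj / proj : k = l and f = proj k.succ
      have hkl : l = k := by
        have e := hA (fun j => decide (j = k)) (fun _ => false)
        rw [h1, h0, h1] at e
        simpa [Pi.sup_def, bool_sup] using e
      subst hkl
      refine Or.inr ⟨l.succ, fun x => ?_⟩
      rw [key x]
      cases hx : x 0
      · exact h0 (Fin.tail x)
      · exact h1 (Fin.tail x)

end Aux3
section Aux4

open Fin Set

def boxMap {m n : ℕ} (g : Fin n → Bool ⊕ Fin m) : (Fin m → Bool) → (Fin n → Bool) :=
  fun x i => Sum.elim id x (g i)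

def GInj {m n : ℕ} (g : Fin n → Bool ⊕ Fin m) : Prop :=
  ∀ i i' k, g i = Sum.inr k → g i' = Sum.inr k → i = i'

/-- The "all projections, all coordinates used" case: a permutation. -/
lemma boxMap_perm_case {m n : ℕ} (g : Fin n → Bool ⊕ Fin m)
    (hinj : GInj g) (hall : ∀ i, ∃ k, g i = Sum.inr k)
    (hsurj : ∀ k, ∃ i, g i = Sum.inr k) : BoxComposite (boxMap g) := by
  choose κ hκ using hall
  have hκinj : Function.Injective κ := fun i i' h =>
    hinj i i' (κ i) (hκ i) (h ▸ hκ i')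
  have hκsurj : Function.Surjective κ := by
    intro k
    obtain ⟨i, hi⟩ := hsurj k
    exact ⟨i, Sum.inr.inj ((hκ i).symm.trans hi)⟩
  have hnm : n = m := by
    have := Fintype.card_of_bijective ⟨hκinj, hκsurj⟩
    simpa using this
  subst hnm
  set σ : Equiv.Perm (Fin n) := Equiv.ofBijective κ ⟨hκinj, hκsurj⟩ with hσ
  have : boxMap g = fun x : Fin n → Bool => id (x ∘ σ) := by
    funext x i
    simp [boxMap, hκ i, hσ, Equiv.ofBijective_apply]
    rfl
  rw [this]
  exact BoxComposite.perm id σ (BoxComposite.id n)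

lemma boxComposite_boxMap {n : ℕ} :
    ∀ (c m : ℕ) (g : Fin n → Bool ⊕ Fin m),
      (Finset.univ.filter fun i => (g i).isLeft).card ≤ c → GInj g →
      BoxComposite (boxMap g) := by
  intro c
  induction c with
  | zero =>
    intro m
    induction m with
    | zero =>
      intro g hc hinj
      refine boxMap_perm_case g hinj ?_ (fun k => k.elim0)
      intro i
      cases hgi : g i with
      | inl b =>
        exfalso
        have : i ∈ Finset.univ.filter fun i => (g i).isLeft := by
          simp [hgi]
        have h0 : (Finset.univ.filter fun i => (g i).isLeft).card = 0 := Nat.le_zero.mp hc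
        rw [Finset.card_eq_zero] at h0
        simp [h0] at this
      | inr k => exact ⟨k, rfl⟩
    | succ m ihm =>
      intro g hc hinj
      have hall : ∀ i, ∃ k, g i = Sum.inr k := by
        intro i
        cases hgi : g i with
        | inl b =>
          exfalso
          have : i ∈ Finset.univ.filter fun i => (g i).isLeft := by simp [hgi]
          have h0 : (Finset.univ.filter fun i => (g i).isLeft).card = 0 := Nat.le_zero.mp hc
          rw [Finset.card_eq_zero] at h0
          simp [h0] at this
        | inr k => exact ⟨k, rfl⟩
      by_cases hk : ∃ k, ∀ i, g i ≠ Sum.inr k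
      · -- some coordinate unused : codegeneracy
        obtain ⟨k, hk⟩ := hk
        set e : Fin (m+1) ≃ Option (Fin m) := finSuccEquiv' k with he
        set g' : Fin n → Bool ⊕ Fin m := fun i =>
          Sum.elim Sum.inl (fun k' => Option.elim (e k') (Sum.inl false) Sum.inr) (g i) with hg'
        have hval : ∀ i k', g i = Sum.inr k' → ∃ j, k.succAbove j = k' ∧ g' i = Sum.inr j := by
          intro i k' hgi
          have hne : k' ≠ k := fun h => hk i (h ▸ hgi)
          obtain ⟨j, hj⟩ := Fin.exists_succAbove_eq hne
          refine ⟨j, hj, ?_⟩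
          have : e k' = some j := by rw [← hj, he, finSuccEquiv'_succAbove]
          simp [hg', hgi, this]
        have heq : boxMap g = fun x : Fin (m+1) → Bool => boxMap g' (x ∘ k.succAbove) := by
          funext x i
          cases hgi : g i with
          | inl b => simp [boxMap, hg', hgi]
          | inr k' =>
            obtain ⟨j, hj, hj'⟩ := hval i k' hgi
            simp [boxMap, hgi, hj', ← hj]
        have hinj' : GInj g' := by
          intro i i' j hi hi'
          obtain ⟨k1, hk1⟩ := hall i
          obtain ⟨k2, hk2⟩ := hall i'
          obtain ⟨j1, hj1, hj1'⟩ := hval i k1 hk1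
          obtain ⟨j2, hj2, hj2'⟩ := hval i' k2 hk2
          rw [hi] at hj1'
          rw [hi'] at hj2'
          have e1 : j = j1 := Sum.inr.inj hj1'
          have e2 : j = j2 := Sum.inr.inj hj2'
          apply hinj i i' k1 hk1
          rw [hk2, ← hj1, ← hj2, ← e1, ← e2]
        have hc' : (Finset.univ.filter fun i => (g' i).isLeft).card ≤ 0 := by
          have : ∀ i, (g' i).isLeft = (g i).isLeft := by
            intro i
            cases hgi : g i with
            | inl b => simp [hg', hgi]
            | inr k' =>
              obtain ⟨j, hj, hj'⟩ := hval i k' hgi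
              simp [hj', hgi]
          simpa [this] using hc
        rw [heq]
        exact BoxComposite.codeg (boxMap g') k (ihm g' hc' hinj')
      · -- all coordinates used : permutation case
        push_neg at hk
        refine boxMap_perm_case g hinj hall ?_
        intro k
        obtain ⟨i, hi⟩ := hk k
        exact ⟨i, hi⟩
  | succ c ihc =>
    intro m g hc hinj
    by_cases hl : ∃ i b, g i = Sum.inl b
    · -- a constant coordinate : coface
      obtain ⟨i0, b, hi0⟩ := hl
      classical
      set g' : Fin n → Bool ⊕ Fin (m+1) := fun i =>
        if i = i0 then Sum.inr (Fin.last m) else Sum.map id Fin.castSucc (g i) with hg'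
      have heq : boxMap g = fun x : Fin m → Bool =>
          boxMap g' ((Fin.last m).insertNth b x) := by
        funext x i
        by_cases hii : i = i0
        · subst hii
          show Sum.elim id x (g i) = Sum.elim id ((Fin.last m).insertNth b x) (g' i)
          rw [hi0, show g' i = Sum.inr (Fin.last m) from by rw [hg']; simp]
          simp [Fin.insertNth_apply_same]
        · cases hgi : g i with
          | inl c' =>
            show Sum.elim id x (g i) = Sum.elim id ((Fin.last m).insertNth b x) (g' i)
            rw [hgi, show g' i = Sum.inl c' from by rw [hg']; simp [hii, hgi]]
            rfl
          | inr k =>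
            show Sum.elim id x (g i) = Sum.elim id ((Fin.last m).insertNth b x) (g' i)
            rw [hgi, show g' i = Sum.inr (Fin.castSucc k) from by rw [hg']; simp [hii, hgi]]
            rw [show Fin.castSucc k = (Fin.last m).succAbove k from by rw [Fin.succAbove_last]]
            simp [Fin.insertNth_apply_succAbove]
      have hinj' : GInj g' := by
        intro i i' j hi hi'
        by_cases h1 : i = i0 <;> by_cases h2 : i' = i0
        · rw [h1, h2]
        · exfalso
          rw [hg'] at hi hi'
          simp only [h1, if_pos rfl] at hi
          simp only [if_neg h2] at hi'
          cases hgi : g i' with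
          | inl b' => rw [hgi] at hi'; simp at hi'
          | inr k =>
            rw [hgi] at hi'
            simp only [Sum.map_inr] at hi'
            exact absurd ((Sum.inr.inj hi').trans (Sum.inr.inj hi).symm)
              (Fin.castSucc_lt_last k).ne
        · exfalso
          rw [hg'] at hi hi'
          simp only [h2, if_pos rfl] at hi'
          simp only [if_neg h1] at hi
          cases hgi : g i with
          | inl b' => rw [hgi] at hi; simp at hi
          | inr k =>
            rw [hgi] at hi
            simp only [Sum.map_inr] at hi
            exact absurd ((Sum.inr.inj hi).trans (Sum.inr.inj hi').symm)
              (Fin.castSucc_lt_last k).ne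
        · rw [hg'] at hi hi'
          simp only [if_neg h1] at hi
          simp only [if_neg h2] at hi'
          cases hgi : g i with
          | inl b' => rw [hgi] at hi; simp at hi
          | inr k =>
            cases hgi' : g i' with
            | inl b' => rw [hgi'] at hi'; simp at hi'
            | inr k' =>
              rw [hgi] at hi; rw [hgi'] at hi'
              simp only [Sum.map_inr] at hi hi'
              have : k = k' := Fin.castSucc_injective m
                ((Sum.inr.inj hi).trans (Sum.inr.inj hi').symm)
              exact hinj i i' k hgi (this ▸ hgi')
      have hc' : (Finset.univ.filter fun i => (g' i).isLeft).card ≤ c := by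
        have hset : (Finset.univ.filter fun i => (g' i).isLeft)
            = (Finset.univ.filter fun i => (g i).isLeft).erase i0 := by
          ext i
          simp only [Finset.mem_filter, Finset.mem_univ, true_and, Finset.mem_erase]
          constructor
          · intro h
            by_cases hii : i = i0
            · exfalso; rw [hg'] at h; simp [hii] at h
            · refine ⟨hii, ?_⟩
              rw [hg'] at h
              simp only [if_neg hii] at h
              cases hgi : g i with
              | inl b' => simp
              | inr k => rw [hgi] at h; simp at h
          · rintro ⟨hii, h⟩
            rw [hg']
            simp only [if_neg hii]
            cases hgi : g i with
            | inl b' => simp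
            | inr k => rw [hgi] at h; simp at h
        rw [hset]
        have hmem : i0 ∈ Finset.univ.filter fun i => (g i).isLeft := by simp [hi0]
        have := Finset.card_erase_of_mem hmem
        omega
      rw [heq]
      exact BoxComposite.coface (boxMap g') (Fin.last m) b (ihc (m+1) g' hc' hinj')
    · -- no constants : count is zero, use previous level
      push_neg at hl
      refine ihc m g ?_ hinj
      have : (Finset.univ.filter fun i => (g i).isLeft) = ∅ := by
        rw [Finset.filter_eq_empty_iff]
        intro i _
        cases hgi : g i with
        | inl b => exact absurd hgi (hl i b)
        | inr k => simp
      simp [this]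

end Aux4
/-- A map between finite Boolean lattices is an interval-preserving lattice
homomorphism iff it is a composite of cofaces, codegeneracies, and coordinate
permutations. -/
theorem intervalPreserving_latticeHom_iff_boxComposite (m n : ℕ)
    (φ : (Fin m → Bool) → (Fin n → Bool)) :
    ((∀ x y : Fin m → Bool, φ (x ⊔ y) = φ x ⊔ φ y) ∧
        (∀ x y : Fin m → Bool, φ (x ⊓ y) = φ x ⊓ φ y) ∧
        (∀ I : Set (Fin m → Bool), IsIntervalSet I → IsIntervalSet (φ '' I))) ↔
      BoxComposite φ := by
  constructor
  · rintro ⟨hs, hi, hI⟩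
    have hcoord : ∀ i : Fin n, ∃ s : Bool ⊕ Fin m, ∀ x, φ x i = Sum.elim id x s := by
      intro i
      have hsi : ∀ x y : Fin m → Bool,
          (fun x => φ x i) (x ⊔ y) = (fun x => φ x i) x ⊔ (fun x => φ x i) y := by
        intro x y
        have := congrFun (hs x y) i
        simpa [Pi.sup_apply] using this
      have hii : ∀ x y : Fin m → Bool,
          (fun x => φ x i) (x ⊓ y) = (fun x => φ x i) x ⊓ (fun x => φ x i) y := by
        intro x y
        have := congrFun (hi x y) i
        simpa [Pi.inf_apply] using this
      rcases classify_latticeHom (fun x => φ x i) hsi hii with ⟨b, hb⟩ | ⟨k, hk⟩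
      · exact ⟨Sum.inl b, fun x => by simpa using hb x⟩
      · exact ⟨Sum.inr k, fun x => by simpa using hk x⟩
    choose g hg using hcoord
    have hφ : φ = boxMap g := by
      funext x i
      exact hg i x
    have mono : ∀ x y : Fin m → Bool, x ≤ y → φ x ≤ φ y := by
      intro x y hxy
      have h1 : x ⊔ y = y := sup_eq_right.mpr hxy
      rw [← h1, hs]
      exact le_sup_left
    have hinj : GInj g := by
      intro i i' k hi1 hi2
      by_contra hne
      have hu : IsIntervalSet (Set.univ : Set (Fin m → Bool)) :=
        ⟨⊥, ⊤, bot_le, Set.Icc_bot_top.symm⟩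
      obtain ⟨a, c, hac, him⟩ := hI Set.univ hu
      have hbotm : φ ⊥ ∈ Set.Icc a c := by
        rw [← him]; exact ⟨⊥, trivial, rfl⟩
      have htopm : φ ⊤ ∈ Set.Icc a c := by
        rw [← him]; exact ⟨⊤, trivial, rfl⟩
      classical
      set y : Fin n → Bool := Function.update (φ ⊤) i false with hy
      have hbotφ : φ ⊥ i = false := by
        rw [hg i ⊥, hi1]; rfl
      have htopφ : φ ⊤ i' = true := by
        rw [hg i' ⊤, hi2]; rfl
      have hymem : y ∈ Set.Icc a c := by
        constructor
        · intro j
          by_cases hj : j = i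
          · subst hj
            rw [hy, Function.update_self]
            exact le_trans (hbotm.1 j) (le_of_eq hbotφ)
          · rw [hy, Function.update_of_ne hj]
            exact le_trans (hbotm.1 j) (mono ⊥ ⊤ bot_le j)
        · intro j
          by_cases hj : j = i
          · subst hj
            rw [hy, Function.update_self]
            exact le_trans (Bool.false_le _) (htopm.2 j)
          · rw [hy, Function.update_of_ne hj]
            exact htopm.2 j
      rw [← him] at hymem
      obtain ⟨x, -, hx⟩ := hymem
      have e1 : x k = false := by
        have := congrFun hx i
        rw [hg i x, hi1] at this
        rw [hy] at this
        simpa using this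
      have e2 : x k = true := by
        have := congrFun hx i'
        rw [hg i' x, hi2] at this
        rw [hy, Function.update_of_ne (fun h => hne h.symm)] at this
        simp only [Sum.elim_inr] at this
        rw [this, htopφ]
      rw [e1] at e2
      exact Bool.false_ne_true e2
    rw [hφ]
    exact boxComposite_boxMap _ m g le_rfl hinj
  · intro h
    exact boxComposite_boxProps φ h
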